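/- Let $B$ be a prime Noetherian ring of Krull dimension $1$ which is semilocal with $J(B) \neq 0$. Then $B$ is right bounded: every essential right ideal of $B$ contains a nonzero two-sided ideal of $B$. -/

import Mathlib

/-- Gabriel–Rentschler Krull dimension at most `1`. -/
def KrullDimLEOne (R M : Type*) [Ring R] [AddCommGroup M] [Module R M] : Prop :=
  ∀ N : ℕ → Submodule R M, (∀ n : ℕ, N (n + 1) ≤ N n) →
    ∃ t : ℕ, ∀ n ≥ t, IsArtinian R (↥(N n) ⧸ (Submodule.comap (N n).subtype (N (n + 1))))

namespace RightBoundedAux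

open MulOpposite Submodule

variable {B : Type*} [Ring B]

/-- Left multiplication by `x` as an endomorphism of the right module `B`. -/
def lmul (x : B) : B →ₗ[Bᵐᵒᵖ] B where
  toFun r := x * r
  map_add' a b := mul_add x a b
  map_smul' m r := by
    show x * (r * m.unop) = (x * r) * m.unop
    rw [mul_assoc]

@[simp] lemma lmul_apply (x r : B) : lmul x r = x * r := rfl

/-- The right annihilator of an element, as a right ideal. -/
def rAnn (x : B) : Submodule Bᵐᵒᵖ B where
  carrier := {r | x * r = 0}
  add_mem' := by intro a b ha hb; simp only [Set.mem_setOf_eq] at *; rw [mul_add, ha, hb, add_zero]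
  zero_mem' := by simp
  smul_mem' := by
    intro m r hr
    show x * (r * m.unop) = 0
    rw [← mul_assoc, hr, zero_mul]

@[simp] lemma mem_rAnn {x r : B} : r ∈ rAnn x ↔ x * r = 0 := Iff.rfl

/-- `B` as a right module over itself is isomorphic to `Bᵐᵒᵖ` over itself. -/
def opE : B ≃ₗ[Bᵐᵒᵖ] Bᵐᵒᵖ where
  toFun := op
  invFun := unop
  left_inv _ := rfl
  right_inv _ := rfl
  map_add' := op_add
  map_smul' m r := by
    show op (r * m.unop) = m * op r
    rw [op_mul, op_unop]

lemma krull_transport {R M M' : Type*} [Ring R] [AddCommGroup M] [AddCommGroup M']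
    [Module R M] [Module R M'] (e : M ≃ₗ[R] M') (h : KrullDimLEOne R M) :
    KrullDimLEOne R M' := by
  intro N hN
  obtain ⟨t, ht⟩ := h (fun n => (N n).comap (e : M →ₗ[R] M'))
    (fun n => Submodule.comap_mono (hN n))
  refine ⟨t, fun n hn => ?_⟩
  have hart := ht n hn
  set P : ℕ → Submodule R M := fun n => (N n).comap (e : M →ₗ[R] M') with hP
  have hmap : ∀ k, (P k).map (e : M →ₗ[R] M') = N k := fun k =>
    Submodule.map_comap_eq_of_surjective e.surjective _
  -- the equivalence between the corresponding submodules
  let f : ↥(P n) ≃ₗ[R] ↥(N n) := LinearEquiv.ofSubmodules e (P n) (N n) (hmap n)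
  have hfq : (Submodule.comap (P n).subtype (P (n + 1))).map (f : ↥(P n) →ₗ[R] ↥(N n))
      = Submodule.comap (N n).subtype (N (n + 1)) := by
    ext x
    simp only [Submodule.mem_map, Submodule.mem_comap, Submodule.coe_subtype]
    constructor
    · rintro ⟨⟨y, hy⟩, hy2, rfl⟩
      exact hy2
    · rintro hx
      have hx' : (x : M') ∈ N n := x.2
      obtain ⟨y, hy⟩ := e.surjective (x : M')
      have hyP : y ∈ P n := by
        simp only [hP, Submodule.mem_comap, LinearEquiv.coe_coe]; rw [hy]; exact hx'
      refine ⟨⟨y, hyP⟩, ?_, ?_⟩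
      · simp only [hP, Submodule.mem_comap, LinearEquiv.coe_coe]; rw [hy]; exact hx
      · apply Subtype.ext
        show e y = (x : M')
        exact hy
  exact isArtinian_of_linearEquiv
    (Submodule.Quotient.equiv (Submodule.comap (P n).subtype (P (n + 1)))
      (Submodule.comap (N n).subtype (N (n + 1))) f hfq)

lemma unit_swap {a b : B} (h : IsUnit (1 + a * b)) : IsUnit (1 + b * a) := by
  obtain ⟨u, hu⟩ := h
  set v := (↑u⁻¹ : B) with hvdef
  have h1 : (1 + a * b) * v = 1 := by rw [← hu]; exact u.mul_inv
  have h2 : v * (1 + a * b) = 1 := by rw [← hu]; exact u.inv_mul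
  have e1 : a * (b * v) = 1 - v := by
    have h3 : v + a * (b * v) = 1 := by rw [← h1]; noncomm_ring
    exact eq_sub_of_add_eq' h3
  have e2 : (v * a) * b = 1 - v := by
    have h3 : v + (v * a) * b = 1 := by rw [← h2]; noncomm_ring
    exact eq_sub_of_add_eq' h3
  refine isUnit_iff_exists.mpr ⟨1 - b * v * a, ?_, ?_⟩
  · calc (1 + b * a) * (1 - b * v * a)
        = 1 + b * a - b * v * a - b * (a * (b * v)) * a := by noncomm_ring
      _ = 1 + b * a - b * v * a - b * (1 - v) * a := by rw [e1]
      _ = 1 := by noncomm_ring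
  · calc (1 - b * v * a) * (1 + b * a)
        = 1 + b * a - b * v * a - b * ((v * a) * b) * a := by noncomm_ring
      _ = 1 + b * a - b * v * a - b * (1 - v) * a := by rw [e2]
      _ = 1 := by noncomm_ring

lemma mem_jacobson_bot_iff_unit {x : B} :
    x ∈ (⊥ : Ideal B).jacobson ↔ ∀ y : B, IsUnit (y * x + 1) := by
  constructor
  · intro h y
    obtain ⟨z, hz⟩ := Ideal.mem_jacobson_iff.mp h y
    rw [Ideal.mem_bot] at hz
    have hz1 : z * y * x + z = 1 := sub_eq_zero.mp hz
    have h1 : z * (y * x + 1) = 1 := by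
      calc z * (y * x + 1) = z * y * x + z := by noncomm_ring
        _ = 1 := hz1
    have h2 : -(z * y) * x + 1 = z := by
      have h' : z = 1 - z * y * x := eq_sub_of_add_eq' hz1
      calc -(z * y) * x + 1 = 1 - z * y * x := by noncomm_ring
        _ = z := h'.symm
    obtain ⟨w, hw⟩ := Ideal.mem_jacobson_iff.mp h (-(z * y))
    rw [Ideal.mem_bot] at hw
    have hw1 : w * -(z * y) * x + w = 1 := sub_eq_zero.mp hw
    have hwz : w * z = 1 := by
      conv_lhs => rw [← h2]
      calc w * (-(z * y) * x + 1) = w * -(z * y) * x + w := by noncomm_ring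
        _ = 1 := hw1
    have hw_eq : w = y * x + 1 := by
      calc w = w * (z * (y * x + 1)) := by rw [h1, mul_one]
        _ = (w * z) * (y * x + 1) := by rw [mul_assoc]
        _ = y * x + 1 := by rw [hwz, one_mul]
    exact isUnit_iff_exists.mpr ⟨z, hw_eq ▸ hwz, h1⟩
  · intro h
    apply Ideal.mem_jacobson_iff.mpr
    intro y
    obtain ⟨v, hv1, hv2⟩ := isUnit_iff_exists.mp (h y)
    refine ⟨v, Ideal.mem_bot.mpr ?_⟩
    have : v * (y * x + 1) = 1 := hv2
    calc v * y * x + v - 1 = v * (y * x + 1) - 1 := by noncomm_ring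
      _ = 0 := by rw [this, sub_self]

lemma jac_right {x : B} (hx : x ∈ ((⊥ : Ideal B)).jacobson) (b : B) :
    x * b ∈ ((⊥ : Ideal B)).jacobson := by
  rw [mem_jacobson_bot_iff_unit] at hx ⊢
  intro y
  have h1 : IsUnit (1 + b * (y * x)) := by
    have h0 := hx (b * y)
    have he : 1 + b * (y * x) = b * y * x + 1 := by noncomm_ring
    rw [he]
    exact h0
  have h2 := unit_swap h1
  have he2 : y * (x * b) + 1 = 1 + y * x * b := by noncomm_ring
  rw [he2]
  exact h2

lemma jac_unit' {j : B} (hj : j ∈ ((⊥ : Ideal B)).jacobson) (s : B) :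
    IsUnit (1 - j * s) := by
  have h0 := (mem_jacobson_bot_iff_unit.mp hj) (-s)
  have he : 1 + (-s) * j = -s * j + 1 := by noncomm_ring
  have h1 : IsUnit (1 + (-s) * j) := by rw [he]; exact h0
  have h2 := unit_swap h1
  have he2 : 1 - j * s = 1 + j * (-s) := by noncomm_ring
  rw [he2]
  exact h2

/-- span of the members of a list, as a right ideal -/
def WL : List B → Submodule Bᵐᵒᵖ B
  | [] => ⊥
  | a :: l => Submodule.span Bᵐᵒᵖ {a} ⊔ WL l

lemma mem_span_singleton_right {a z : B} :
    z ∈ Submodule.span Bᵐᵒᵖ {a} ↔ ∃ b : B, a * b = z := by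
  rw [Submodule.mem_span_singleton]
  constructor
  · rintro ⟨c, rfl⟩; exact ⟨c.unop, rfl⟩
  · rintro ⟨b, rfl⟩; exact ⟨op b, rfl⟩

lemma mul_WL_zero {a : B} : ∀ l : List B, (∀ x ∈ l, a * x = 0) → ∀ w ∈ WL l, a * w = 0 := by
  intro l
  induction l with
  | nil => intro _ w hw; have : w = 0 := hw; simp [this]
  | cons x l ih =>
    intro h w hw
    rcases Submodule.mem_sup.mp hw with ⟨u, hu, v, hv, rfl⟩
    obtain ⟨b, rfl⟩ := mem_span_singleton_right.mp hu
    rw [mul_add, ← mul_assoc, h x List.mem_cons_self, zero_mul,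
      ih (fun y hy => h y (List.mem_cons_of_mem x hy)) v hv, add_zero]

lemma WL_le {I : Submodule Bᵐᵒᵖ B} : ∀ l : List B, (∀ x ∈ l, x ∈ I) → WL l ≤ I := by
  intro l
  induction l with
  | nil => intro _; exact bot_le
  | cons x l ih =>
    intro h
    apply sup_le
    · intro z hz
      obtain ⟨b, rfl⟩ := mem_span_singleton_right.mp hz
      have := I.smul_mem (op b) (h x List.mem_cons_self)
      rwa [op_smul_eq_mul] at this
    · exact ih fun y hy => h y (List.mem_cons_of_mem x hy)

lemma WL_append : ∀ l₁ l₂ : List B, WL (l₁ ++ l₂) = WL l₁ ⊔ WL l₂ := by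
  intro l₁ l₂
  induction l₁ with
  | nil => simp [WL]
  | cons x l ih =>
    show Submodule.span Bᵐᵒᵖ {x} ⊔ WL (l ++ l₂) = (Submodule.span Bᵐᵒᵖ {x} ⊔ WL l) ⊔ WL l₂
    rw [ih, sup_assoc]

/-- strictness: an element of the common right annihilator lying in the span is zero. -/
lemma WL_strict : ∀ l : List B, (∀ x ∈ l, rAnn x = rAnn (x * x)) →
    l.Pairwise (fun x y => x * y = 0) →
    ∀ c : B, (∀ x ∈ l, x * c = 0) → c ∈ WL l → c = 0 := by
  intro l
  induction l with
  | nil => intro _ _ c _ hc; exact hc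
  | cons a l ih =>
    intro hann hpw c hc hcW
    rcases Submodule.mem_sup.mp hcW with ⟨u, hu, w, hw, rfl⟩
    obtain ⟨b, rfl⟩ := mem_span_singleton_right.mp hu
    rw [List.pairwise_cons] at hpw
    have haw : a * w = 0 := mul_WL_zero l hpw.1 w hw
    have hac : a * (a * b + w) = 0 := hc a List.mem_cons_self
    rw [mul_add, haw, add_zero, ← mul_assoc] at hac
    have hb : a * b = 0 := by
      have : b ∈ rAnn (a * a) := hac
      rw [← hann a List.mem_cons_self] at this
      exact this
    have hw0 : ∀ x ∈ l, x * w = 0 := by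
      intro x hx
      have := hc x (List.mem_cons_of_mem a hx)
      rwa [hb, zero_add] at this
    rw [hb, zero_add]
    exact ih (fun x hx => hann x (List.mem_cons_of_mem a hx)) hpw.2 w hw0 hw

lemma mul_sum_zero {a : B} : ∀ l : List B, (∀ x ∈ l, a * x = 0) → a * l.sum = 0 := by
  intro l
  induction l with
  | nil => simp
  | cons x l ih =>
    intro h
    rw [List.sum_cons, mul_add, h x List.mem_cons_self, zero_add]
    exact ih fun y hy => h y (List.mem_cons_of_mem x hy)

/-- the right annihilator of the sum equals the common right annihilator. -/
lemma sum_ann : ∀ l : List B, (∀ x ∈ l, rAnn x = rAnn (x * x)) →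
    l.Pairwise (fun x y => x * y = 0) →
    ∀ z : B, l.sum * z = 0 → ∀ x ∈ l, x * z = 0 := by
  intro l
  induction l with
  | nil => intro _ _ z _ x hx; exact absurd hx List.not_mem_nil
  | cons a l ih =>
    intro hann hpw z hz
    rw [List.pairwise_cons] at hpw
    rw [List.sum_cons] at hz
    have haz : a * z = 0 := by
      have h1 : (a * (a + l.sum)) * z = 0 := by rw [mul_assoc, hz, mul_zero]
      rw [mul_add, mul_sum_zero l hpw.1, add_zero] at h1
      have hz2 : z ∈ rAnn (a * a) := h1
      rw [← hann a List.mem_cons_self] at hz2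
      exact hz2
    have hlz : l.sum * z = 0 := by
      rw [add_mul, haz, zero_add] at hz
      exact hz
    intro x hx
    rcases List.mem_cons.mp hx with rfl | hx'
    · exact haz
    · exact ih (fun y hy => hann y (List.mem_cons_of_mem a hy)) hpw.2 z hlz x hx'

lemma sum_mem_of_forall_mem {I : Submodule Bᵐᵒᵖ B} :
    ∀ l : List B, (∀ x ∈ l, x ∈ I) → l.sum ∈ I := by
  intro l
  induction l with
  | nil => simp
  | cons x l ih =>
    intro h
    rw [List.sum_cons]
    exact I.add_mem (h x List.mem_cons_self)
      (ih fun y hy => h y (List.mem_cons_of_mem x hy))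

end RightBoundedAux

section Main

open MulOpposite Submodule RightBoundedAux

variable {B : Type*} [Ring B]

/-- Utumi: in a prime ring whose right ideals satisfy ACC, every nonzero right
ideal contains a non-nilpotent element. -/
lemma exists_nonnilpotent [IsNoetherian Bᵐᵒᵖ B]
    (hprime : ∀ a b : B, (∀ x : B, a * x * b = 0) → a = 0 ∨ b = 0)
    (K : Submodule Bᵐᵒᵖ B) (hK : K ≠ ⊥) :
    ∃ a ∈ K, ∀ n : ℕ, a ^ (n + 1) ≠ 0 := by
  classical
  have swap_pow : ∀ (r x : B) (k : ℕ), (r * x) ^ (k + 1) = r * (x * r) ^ k * x := by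
    intro r x k
    induction k with
    | zero => simp
    | succ k ih =>
      rw [pow_succ, ih, pow_succ]
      simp only [mul_assoc]
  by_contra hcon
  push_neg at hcon
  obtain ⟨a₀, ha₀K, ha₀⟩ := (Submodule.ne_bot_iff K).mp hK
  set C : Set B := {x | x ≠ 0 ∧ ∀ r : B, ∃ n : ℕ, (r * x) ^ (n + 1) = 0} with hCdef
  have hmemK : ∀ x ∈ K, ∀ r : B, ∃ n : ℕ, (r * x) ^ (n + 1) = 0 := by
    intro x hx r
    have hxr : x * r ∈ K := by
      have := K.smul_mem (op r) hx
      rwa [op_smul_eq_mul] at this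
    obtain ⟨m, hm⟩ := hcon (x * r) hxr
    exact ⟨m + 1, by rw [swap_pow, hm, mul_zero, zero_mul]⟩
  have hC0 : a₀ ∈ C := ⟨ha₀, hmemK a₀ ha₀K⟩
  obtain ⟨W, hW, hWmax⟩ := (set_has_maximal_iff_noetherian.mpr inferInstance)
    (rAnn '' C) ⟨rAnn a₀, Set.mem_image_of_mem _ hC0⟩
  obtain ⟨a, haC, rfl⟩ := hW
  have claim : ∀ r : B, a * r * a = 0 := by
    intro r
    by_contra hara
    have hb : r * a ≠ 0 := by
      intro h
      exact hara (by rw [mul_assoc, h, mul_zero])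
    set b := r * a with hbdef
    have hbC : b ∈ C := by
      refine ⟨hb, fun s => ?_⟩
      obtain ⟨n, hn⟩ := haC.2 (s * r)
      exact ⟨n, by rw [hbdef, ← mul_assoc, hn]⟩
    have hbnil : ∃ n : ℕ, b ^ (n + 1) = 0 := by
      obtain ⟨n, hn⟩ := haC.2 r
      exact ⟨n, hn⟩
    set n := Nat.find hbnil with hndef
    have hn : b ^ (n + 1) = 0 := Nat.find_spec hbnil
    have hnpos : 1 ≤ n := by
      rcases Nat.eq_zero_or_pos n with h0 | h1
      · exfalso; apply hb; have := hn; rw [h0, pow_one] at this; exact this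
      · exact h1
    set d := b ^ n with hddef
    have hd : d ≠ 0 := by
      have := Nat.find_min hbnil (show n - 1 < n by omega)
      intro h
      apply this
      rw [show n - 1 + 1 = n by omega]
      exact h
    have hbsplit : b ^ n = b ^ (n - 1) * r * a := by
      conv_lhs => rw [show n = (n - 1) + 1 by omega, pow_succ, hbdef, ← mul_assoc]
    have hdC : d ∈ C := by
      refine ⟨hd, fun s => ?_⟩
      obtain ⟨m, hm⟩ := haC.2 (s * b ^ (n - 1) * r)
      refine ⟨m, ?_⟩
      rw [hddef, hbsplit]
      simp only [← mul_assoc] at hm ⊢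
      exact hm
    have hle : rAnn a ≤ rAnn d := by
      intro z hz
      simp only [mem_rAnn] at hz ⊢
      rw [hddef, hbsplit, mul_assoc, mul_assoc, hz, mul_zero, mul_zero]
    have hbd : b ∈ rAnn d := by
      simp only [mem_rAnn, hddef]
      rw [← pow_succ]
      exact hn
    have hba : b ∉ rAnn a := by
      simp only [mem_rAnn, hbdef, ← mul_assoc]
      exact hara
    exact hWmax (rAnn d) (Set.mem_image_of_mem _ hdC)
      (lt_of_le_of_ne hle (fun h => hba (h ▸ hbd)))
  rcases hprime a a (fun x => claim x) with h | h <;> exact haC.1 h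

/-- Goldie: in a prime right Noetherian ring, every essential right ideal contains
an element with zero right annihilator. -/
lemma exists_regular [IsNoetherian Bᵐᵒᵖ B]
    (hprime : ∀ a b : B, (∀ x : B, a * x * b = 0) → a = 0 ∨ b = 0)
    (I : Submodule Bᵐᵒᵖ B)
    (hess : ∀ J : Submodule Bᵐᵒᵖ B, J ⊓ I = ⊥ → J = ⊥) :
    ∃ c ∈ I, rAnn c = ⊥ := by
  classical
  set S : Set (Submodule Bᵐᵒᵖ B) :=
    {W | ∃ l : List B, (∀ x ∈ l, x ∈ I ∧ rAnn x = rAnn (x * x)) ∧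
      l.Pairwise (fun x y => x * y = 0) ∧ WL l = W} with hSdef
  have hSne : S.Nonempty := ⟨⊥, [], by simp [WL]⟩
  obtain ⟨W, hWS, hWmax⟩ := (set_has_maximal_iff_noetherian.mpr inferInstance) S hSne
  obtain ⟨l, hl1, hl2, rfl⟩ := hWS
  -- the common right annihilator of the list
  set R : Submodule Bᵐᵒᵖ B :=
    { carrier := {z | ∀ x ∈ l, x * z = 0}
      add_mem' := by
        intro a b ha hb x hx
        rw [mul_add, ha x hx, hb x hx, add_zero]
      zero_mem' := by intro x hx; rw [mul_zero]
      smul_mem' := by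
        intro m z hz x hx
        show x * (z * m.unop) = 0
        rw [← mul_assoc, hz x hx, zero_mul] } with hRdef
  by_cases hR : R = ⊥
  · refine ⟨l.sum, sum_mem_of_forall_mem l (fun x hx => (hl1 x hx).1), ?_⟩
    refine le_bot_iff.mp ?_
    intro z hz
    have hz' : ∀ x ∈ l, x * z = 0 :=
      sum_ann l (fun x hx => (hl1 x hx).2) hl2 z hz
    have : z ∈ R := hz'
    rw [hR] at this
    exact this
  · exfalso
    have hK : R ⊓ I ≠ ⊥ := fun h => hR (hess R h)
    obtain ⟨a, haK, hanil⟩ := exists_nonnilpotent hprime (R ⊓ I) hK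
    -- stabilize the right annihilators of powers of `a`
    have hmono : Monotone (fun n : ℕ => rAnn (a ^ (n + 1))) := by
      intro i j hij z hz
      simp only [mem_rAnn] at hz ⊢
      have : a ^ (j + 1) = a ^ (j - i) * a ^ (i + 1) := by
        rw [← pow_add]
        congr 1
        omega
      rw [this, mul_assoc, hz, mul_zero]
    obtain ⟨m, hm⟩ := (monotone_stabilizes_iff_noetherian.mpr inferInstance)
      ⟨fun n : ℕ => rAnn (a ^ (n + 1)), hmono⟩
    set c := a ^ (m + 1) with hcdef
    have hcR : c ∈ R ⊓ I := by
      rw [hcdef, pow_succ']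
      have := (R ⊓ I).smul_mem (op (a ^ m)) haK
      rwa [op_smul_eq_mul] at this
    have hc0 : c ≠ 0 := hanil m
    have hcann : rAnn c = rAnn (c * c) := by
      have := hm (2 * m + 1) (by omega)
      simp only [OrderHom.coe_mk] at this
      rw [hcdef, ← pow_add]
      rw [show m + 1 + (m + 1) = 2 * m + 1 + 1 by omega]
      exact this
    -- extend the list
    have hl'S : WL (l ++ [c]) ∈ S := by
      refine ⟨l ++ [c], ?_, ?_, rfl⟩
      · intro x hx
        rcases List.mem_append.mp hx with hx | hx
        · exact hl1 x hx
        · rw [List.mem_singleton.mp hx]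
          exact ⟨hcR.2, hcann⟩
      · rw [List.pairwise_append]
        refine ⟨hl2, List.pairwise_singleton _ _, ?_⟩
        intro x hx y hy
        rw [List.mem_singleton.mp hy]
        exact hcR.1 x hx
    have hcWc : c ∈ WL (l ++ [c]) := by
      rw [WL_append]
      apply Submodule.mem_sup_right
      show c ∈ Submodule.span Bᵐᵒᵖ {c} ⊔ ⊥
      exact Submodule.mem_sup_left (Submodule.mem_span_singleton_self c)
    have hlt : WL l < WL (l ++ [c]) := by
      rw [WL_append]
      refine lt_of_le_of_ne le_sup_left ?_
      intro heq
      have hcW : c ∈ WL l := by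
        have : c ∈ WL l ⊔ WL [c] := by rw [← WL_append]; exact hcWc
        rwa [← heq] at this
      exact hc0 (WL_strict l (fun x hx => (hl1 x hx).2) hl2 c
        (fun x hx => hcR.1 x hx) hcW)
    exact hWmax (WL (l ++ [c])) hl'S hlt

/-- Krull dimension ≤ 1 gives: the quotient by an essential right ideal is Artinian. -/
lemma quotient_artinian [IsNoetherian Bᵐᵒᵖ B]
    (hprime : ∀ a b : B, (∀ x : B, a * x * b = 0) → a = 0 ∨ b = 0)
    (hK1' : KrullDimLEOne Bᵐᵒᵖ B)
    (I : Submodule Bᵐᵒᵖ B)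
    (hess : ∀ J : Submodule Bᵐᵒᵖ B, J ⊓ I = ⊥ → J = ⊥) :
    IsArtinian Bᵐᵒᵖ (B ⧸ I) := by
  obtain ⟨c, hcI, hc⟩ := exists_regular hprime I hess
  have hc' : ∀ z : B, c * z = 0 → z = 0 := by
    intro z hz
    have : z ∈ rAnn c := hz
    rw [hc] at this
    exact this
  have hcinj : ∀ (k : ℕ) (z : B), c ^ k * z = 0 → z = 0 := by
    intro k
    induction k with
    | zero => intro z hz; rwa [pow_zero, one_mul] at hz
    | succ k ih =>
      intro z hz
      rw [pow_succ, mul_assoc] at hz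
      exact hc' z (ih _ hz)
  set N : ℕ → Submodule Bᵐᵒᵖ B := fun n => LinearMap.range (lmul (c ^ n)) with hN
  have hdesc : ∀ n, N (n + 1) ≤ N n := by
    rintro n z hz
    obtain ⟨r, rfl⟩ := hz
    refine ⟨c * r, ?_⟩
    show c ^ n * (c * r) = c ^ (n + 1) * r
    rw [pow_succ, mul_assoc]
  obtain ⟨t, ht⟩ := hK1' N hdesc
  have hart := ht t le_rfl
  let φ : B →ₗ[Bᵐᵒᵖ] ↥(N t) := (lmul (c ^ t)).rangeRestrict
  let ψ := (Submodule.mkQ (Submodule.comap (N t).subtype (N (t + 1)))).comp φ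
  have hψsurj : Function.Surjective ψ :=
    (Submodule.mkQ_surjective _).comp (LinearMap.surjective_rangeRestrict _)
  have hker : LinearMap.ker ψ = LinearMap.range (lmul c) := by
    ext z
    simp only [ψ, φ, LinearMap.mem_ker, LinearMap.comp_apply, Submodule.mkQ_apply,
      Submodule.Quotient.mk_eq_zero, Submodule.mem_comap, Submodule.coe_subtype,
      LinearMap.rangeRestrict, LinearMap.codRestrict_apply, LinearMap.mem_range]
    constructor
    · rintro ⟨s, hs⟩
      have hs' : (lmul (c ^ (t + 1))) s = c ^ t * z := hs
      have : c ^ t * (z - c * s) = 0 := by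
        have h1 : c ^ (t + 1) * s = c ^ t * (c * s) := by rw [pow_succ, mul_assoc]
        rw [mul_sub]
        rw [show c ^ (t + 1) * s = c ^ t * z from hs'] at h1
        rw [← h1, sub_self]
      have hz : z - c * s = 0 := hcinj t _ this
      refine ⟨s, ?_⟩
      show c * s = z
      have := sub_eq_zero.mp hz
      exact this.symm
    · rintro ⟨s, rfl⟩
      refine ⟨s, ?_⟩
      show c ^ (t + 1) * s = c ^ t * (c * s)
      rw [pow_succ, mul_assoc]
  haveI := hart
  have hart2 : IsArtinian Bᵐᵒᵖ (B ⧸ LinearMap.ker ψ) :=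
    isArtinian_of_linearEquiv (ψ.quotKerEquivOfSurjective hψsurj).symm
  rw [hker] at hart2
  have hle : LinearMap.range (lmul c) ≤ Submodule.comap LinearMap.id I := by
    rintro z hz
    obtain ⟨r, rfl⟩ := hz
    show c * r ∈ I
    have := I.smul_mem (op r) hcI
    rwa [op_smul_eq_mul] at this
  haveI := hart2
  refine isArtinian_of_surjective (B ⧸ LinearMap.range (lmul c))
    (Submodule.mapQ _ I LinearMap.id hle) ?_
  intro y
  obtain ⟨x, rfl⟩ := Submodule.mkQ_surjective I y
  exact ⟨Submodule.mkQ _ x, by rw [Submodule.mkQ_apply, Submodule.mapQ_apply]; rfl⟩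

/-- Nakayama à la maximal submodule. -/
lemma nakayama {M : Type*} [AddCommGroup M] [Module Bᵐᵒᵖ M] [IsNoetherian Bᵐᵒᵖ M]
    (V : Submodule Bᵐᵒᵖ M)
    (hV : V ≤ Submodule.span Bᵐᵒᵖ
      {m | ∃ v ∈ V, ∃ j ∈ (⊥ : Ideal B).jacobson, m = (op j) • v}) :
    V = ⊥ := by
  by_contra hne
  obtain ⟨W, hWlt, hWmax⟩ := (set_has_maximal_iff_noetherian.mpr inferInstance)
    {W : Submodule Bᵐᵒᵖ M | W < V} ⟨⊥, bot_lt_iff_ne_bot.mpr hne⟩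
  have claim : Submodule.span Bᵐᵒᵖ
      {m | ∃ v ∈ V, ∃ j ∈ (⊥ : Ideal B).jacobson, m = (op j) • v} ≤ W := by
    rw [Submodule.span_le]
    rintro m ⟨v, hv, j, hj, rfl⟩
    by_contra hmW
    have hmV : (op j) • v ∈ V := V.smul_mem _ hv
    have hsup_le : W ⊔ Submodule.span Bᵐᵒᵖ {(op j) • v} ≤ V :=
      sup_le hWlt.le ((Submodule.span_singleton_le_iff_mem _ _).mpr hmV)
    have hWlt2 : W < W ⊔ Submodule.span Bᵐᵒᵖ {(op j) • v} := by
      refine lt_of_le_of_ne le_sup_left ?_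
      intro heq
      exact hmW (heq ▸ Submodule.mem_sup_right (Submodule.mem_span_singleton_self _))
    have heqV : W ⊔ Submodule.span Bᵐᵒᵖ {(op j) • v} = V := by
      rcases lt_or_eq_of_le hsup_le with h | h
      · exact absurd hWlt2 (hWmax _ h)
      · exact h
    obtain ⟨w, hw, z, hz, hvsum⟩ := Submodule.mem_sup.mp (heqV ▸ hv)
    obtain ⟨t, rfl⟩ := Submodule.mem_span_singleton.mp hz
    have key : (1 - t * op j) • v = w := by
      rw [sub_smul, one_smul, mul_smul]
      exact (eq_sub_of_add_eq hvsum).symm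
    have hunit : IsUnit ((1 : Bᵐᵒᵖ) - t * op j) := by
      have h1 : t * op j = op (j * t.unop) := by
        rw [op_mul, op_unop]
      rw [h1, ← op_one, ← op_sub, isUnit_op]
      exact jac_unit' hj t.unop
    obtain ⟨u, hu⟩ := hunit
    have hvW : v ∈ W := by
      have huv : (u : Bᵐᵒᵖ) • v = w := by rw [hu]; exact key
      have : v = ((u⁻¹ : (Bᵐᵒᵖ)ˣ) : Bᵐᵒᵖ) • w := by
        rw [← huv, ← mul_smul, Units.inv_mul, one_smul]
      rw [this]
      exact W.smul_mem _ hw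
    exact hmW (W.smul_mem (op j) hvW)
  exact absurd (hV.trans claim) (show W < V from hWlt).not_ge

end Main

theorem prime_noetherian_kdim_one_semilocal_is_right_bounded
    (B : Type*) [Ring B] [Nontrivial B]
    [IsNoetherianRing B] [IsNoetherianRing Bᵐᵒᵖ]
    -- `B` is prime
    (hprime : ∀ a b : B, (∀ x : B, a * x * b = 0) → a = 0 ∨ b = 0)
    -- Krull dimension exactly one (at most one on both sides, not Artinian)
    (hK1 : KrullDimLEOne B B) (hK1' : KrullDimLEOne Bᵐᵒᵖ Bᵐᵒᵖ)
    (hnotart : ¬ IsArtinianRing B)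
    -- semilocal: `B/J(B)` is Artinian
    (hsemilocal : IsArtinian B (B ⧸ ((⊥ : Ideal B).jacobson)))
    -- `J(B) ≠ 0`
    (hJ : (⊥ : Ideal B).jacobson ≠ ⊥) :
    ∀ I : Submodule Bᵐᵒᵖ B,
      (∀ J : Submodule Bᵐᵒᵖ B, J ⊓ I = ⊥ → J = ⊥) →  -- `I` essential right ideal
      ∃ x : B, x ≠ 0 ∧ ∀ a b : B, a * x * b ∈ I := by
  classical
  intro I hess
  haveI hNoe : IsNoetherian Bᵐᵒᵖ B :=
    isNoetherian_of_linearEquiv (RightBoundedAux.opE (B := B)).symm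
  have hKB : KrullDimLEOne Bᵐᵒᵖ B :=
    RightBoundedAux.krull_transport (RightBoundedAux.opE (B := B)).symm hK1'
  haveI hart : IsArtinian Bᵐᵒᵖ (B ⧸ I) := quotient_artinian hprime hKB I hess
  haveI hNoeQ : IsNoetherian Bᵐᵒᵖ (B ⧸ I) := isNoetherian_quotient I
  set J := (⊥ : Ideal B).jacobson with hJdef
  -- powers of J are closed under right multiplication
  have hpow_right : ∀ n : ℕ, ∀ x ∈ (J ^ n : Ideal B), ∀ b : B, x * b ∈ (J ^ n : Ideal B) := by
    intro n
    induction n with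
    | zero =>
      intro x _ b
      rw [Submodule.pow_zero, Ideal.one_eq_top]
      trivial
    | succ n ih =>
      intro x hx b
      rw [Submodule.pow_succ] at hx ⊢
      refine Submodule.mul_induction_on (C := fun x => x * b ∈ (J ^ n : Ideal B) * J) hx
        (fun m hm j hj => ?_) (fun y z hy hz => ?_)
      · show m * j * b ∈ (J ^ n : Ideal B) * J
        rw [mul_assoc]
        exact Ideal.mul_mem_mul hm (RightBoundedAux.jac_right hj b)
      · show (y + z) * b ∈ (J ^ n : Ideal B) * J
        rw [add_mul]
        exact add_mem hy hz
  have hpow_le : ∀ n : ℕ, (J ^ (n + 1) : Ideal B) ≤ (J ^ n : Ideal B) := by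
    intro n x hx
    rw [Submodule.pow_succ] at hx
    exact Submodule.mul_induction_on (C := fun x => x ∈ (J ^ n : Ideal B)) hx
      (fun m hm j hj => hpow_right n m hm j) (fun y z hy hz => add_mem hy hz)
  -- powers of J, as right ideals
  let Jop : ℕ → Submodule Bᵐᵒᵖ B := fun n =>
    { carrier := (J ^ n : Ideal B)
      add_mem' := fun ha hb => add_mem ha hb
      zero_mem' := zero_mem _
      smul_mem' := fun m x hx => by
        show x * m.unop ∈ (J ^ n : Ideal B)
        exact hpow_right n x hx m.unop }
  have hJop_mem : ∀ n (x : B), x ∈ Jop n ↔ x ∈ (J ^ n : Ideal B) := fun n x => Iff.rfl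
  -- the descending chain of images in the Artinian quotient
  set V : ℕ → Submodule Bᵐᵒᵖ (B ⧸ I) := fun n => Submodule.map I.mkQ (Jop n) with hVdef
  have hanti : Antitone V := antitone_nat_of_succ_le (fun n =>
    Submodule.map_mono (fun x hx => (hJop_mem n x).mpr (hpow_le n ((hJop_mem (n+1) x).mp hx))))
  obtain ⟨n, hstab⟩ := IsArtinian.monotone_stabilizes
    (⟨V, fun i j hij => hanti hij⟩ : ℕ →o (Submodule Bᵐᵒᵖ (B ⧸ I))ᵒᵈ)
  have hVeq : V n = V (n + 1) := hstab (n + 1) (Nat.le_succ n)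
  have hVbot : V n = ⊥ := by
    refine nakayama (V n) ?_
    intro m hm
    rw [hVeq] at hm
    obtain ⟨x, hx, rfl⟩ := hm
    have hx' : x ∈ ((J ^ n : Ideal B) * J : Ideal B) := by
      rw [← Submodule.pow_succ]
      exact (hJop_mem (n+1) x).mp hx
    refine Submodule.mul_induction_on
      (C := fun x => I.mkQ x ∈ Submodule.span Bᵐᵒᵖ
        {m | ∃ v ∈ V n, ∃ j ∈ (⊥ : Ideal B).jacobson, m = (MulOpposite.op j) • v}) hx'
      (fun a ha j hj => ?_) (fun y z hy hz => ?_)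
    · show I.mkQ (a * j) ∈ _
      apply Submodule.subset_span
      refine ⟨I.mkQ a, ⟨a, (hJop_mem n a).mpr ha, rfl⟩, j, hj, ?_⟩
      rw [← map_smul]
      rfl
    · show I.mkQ (y + z) ∈ _
      rw [map_add]
      exact Submodule.add_mem _ hy hz
  have hJnI : ∀ x ∈ (J ^ n : Ideal B), x ∈ I := by
    intro x hx
    have hmem : I.mkQ x ∈ V n := ⟨x, (hJop_mem n x).mpr hx, rfl⟩
    rw [hVbot] at hmem
    exact (Submodule.Quotient.mk_eq_zero I).mp hmem
  -- powers of J are nonzero, by primeness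
  have hJn_ne : ∀ m : ℕ, (J ^ m : Ideal B) ≠ ⊥ := by
    intro m
    induction m with
    | zero =>
      rw [Submodule.pow_zero, Ideal.one_eq_top]
      exact top_ne_bot
    | succ m ih =>
      intro hbot
      obtain ⟨a, ha, ha0⟩ := (Submodule.ne_bot_iff _).mp ih
      obtain ⟨b, hb, hb0⟩ := (Submodule.ne_bot_iff _).mp hJ
      have hall : ∀ x : B, a * x * b = 0 := by
        intro x
        have h1 : a * x ∈ (J ^ m : Ideal B) := hpow_right m a ha x
        have h2 : a * x * b ∈ (J ^ (m + 1) : Ideal B) := by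
          rw [Submodule.pow_succ]
          exact Ideal.mul_mem_mul h1 hb
        rw [hbot] at h2
        exact h2
      rcases hprime a b hall with h | h
      · exact ha0 h
      · exact hb0 h
  obtain ⟨x, hxJ, hx0⟩ := (Submodule.ne_bot_iff _).mp (hJn_ne n)
  refine ⟨x, hx0, fun a b => ?_⟩
  have h1 : a * x ∈ (J ^ n : Ideal B) := Ideal.mul_mem_left _ a hxJ
  have h2 : a * x * b ∈ (J ^ n : Ideal B) := hpow_right n _ h1 b
  exact hJnI _ h2
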